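/- Let Ψ : ℝ⁴ → ℂ⁴ be differentiable and satisfy the ε-deformed Heisenberg nonlinear spinor equation i γ^μ ∂_μ Ψ = 2s ( A + i ε B γ₅ ) Ψ, where s, ε are real constants and A := Ψ̄Ψ, B := i Ψ̄γ₅Ψ. Then the vector current J^μ := Ψ̄γ^μΨ is conserved for every value of ε: ∂_μ J^μ = 0; while the axial current I^μ := Ψ̄γ^μγ₅Ψ satisfies ∂_μ I^μ = 4 s (1 − ε) A B. In particular, the axial current is conserved precisely for the Heisenberg choice ε = 1. -/

import Mathlib

open scoped BigOperators
open Matrix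

noncomputable section

set_option maxHeartbeats 4000000

/-- The Dirac matrices γ⁰, γ¹, γ², γ³ in the standard Dirac representation. -/
def γm : Fin 4 → Matrix (Fin 4) (Fin 4) ℂ :=
  ![!![1, 0, 0, 0; 0, 1, 0, 0; 0, 0, -1, 0; 0, 0, 0, -1],
    !![0, 0, 0, 1; 0, 0, 1, 0; 0, -1, 0, 0; -1, 0, 0, 0],
    !![0, 0, 0, -Complex.I; 0, 0, Complex.I, 0; 0, Complex.I, 0, 0; -Complex.I, 0, 0, 0],
    !![0, 0, 1, 0; 0, 0, 0, -1; -1, 0, 0, 0; 0, 1, 0, 0]]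

/-- γ₅ := i γ⁰γ¹γ²γ³. -/
def γ5 : Matrix (Fin 4) (Fin 4) ℂ := Complex.I • (γm 0 * γm 1 * γm 2 * γm 3)

/-- The Minkowski metric diag(1,-1,-1,-1) with complex entries. -/
def ηc (μ ν : Fin 4) : ℂ := if μ = ν then (if μ = 0 then 1 else -1) else 0

/-- The Dirac bilinear Ψ̄ Q Ψ, with Ψ̄ := Ψ†γ⁰. -/
def bil (Q : Matrix (Fin 4) (Fin 4) ℂ) (Ψ : Fin 4 → ℂ) : ℂ :=
  dotProduct (Matrix.vecMul (star Ψ) (γm 0)) (Q.mulVec Ψ)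

/-- Partial derivative ∂_μ of a complex-valued function on ℝ⁴ (Cartesian coordinates). -/
def pdc (μ : Fin 4) (f : (Fin 4 → ℝ) → ℂ) (x : Fin 4 → ℝ) : ℂ :=
  fderiv ℝ f x (Pi.single μ 1)

lemma γ5_eq : γ5 = !![0,0,1,0; 0,0,0,1; 1,0,0,0; 0,1,0,0] := by
  rw [γ5]
  ext i j
  fin_cases i <;> fin_cases j <;>
    simp [γm, Matrix.mul_apply, Fin.sum_univ_four] <;> simp [Matrix.vecHead, Matrix.vecTail]

lemma bil_expand (Q : Matrix (Fin 4) (Fin 4) ℂ) (v : Fin 4 → ℂ) :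
    bil Q v = ∑ i, ∑ j, starRingEnd ℂ (v i) * ((γm 0 * Q) i j) * v j := by
  simp only [bil, dotProduct, Matrix.vecMul, Matrix.mulVec, Matrix.mul_apply,
    Fin.sum_univ_four, Pi.star_apply, RCLike.star_def]
  simp [γm, Matrix.vecHead, Matrix.vecTail]
  ring

lemma pdc_bil (Ψ : (Fin 4 → ℝ) → Fin 4 → ℂ) (hdiff : ∀ i, Differentiable ℝ (fun x => Ψ x i))
    (Q : Matrix (Fin 4) (Fin 4) ℂ) (μ : Fin 4) (x : Fin 4 → ℝ) :
    pdc μ (fun y => bil Q (Ψ y)) x =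
      ∑ i, ∑ j, (starRingEnd ℂ (pdc μ (fun y => Ψ y i) x) * ((γm 0 * Q) i j) * Ψ x j
        + starRingEnd ℂ (Ψ x i) * ((γm 0 * Q) i j) * pdc μ (fun y => Ψ y j) x) := by
  have hterm : ∀ i j : Fin 4, HasFDerivAt (fun y => starRingEnd ℂ (Ψ y i) * ((γm 0 * Q) i j) * Ψ y j)
      (((starRingEnd ℂ (Ψ x i) * ((γm 0 * Q) i j)) • (fderiv ℝ (fun y => Ψ y j) x))
        + (Ψ x j • (((γm 0 * Q) i j) • ((starL' ℝ : ℂ ≃L[ℝ] ℂ).toContinuousLinearMap.comp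
            (fderiv ℝ (fun y => Ψ y i) x))))) x := by
    intro i j
    have h1 : HasFDerivAt (fun y => Ψ y i) (fderiv ℝ (fun y => Ψ y i) x) x :=
      ((hdiff i) x).hasFDerivAt
    have h2 : HasFDerivAt (fun y => Ψ y j) (fderiv ℝ (fun y => Ψ y j) x) x :=
      ((hdiff j) x).hasFDerivAt
    have h1s := h1.star
    have h1sm := h1s.mul_const ((γm 0 * Q) i j)
    have := h1sm.mul h2
    convert this using 1
    all_goals rfl
  have hsum : HasFDerivAt (fun y => ∑ i, ∑ j, starRingEnd ℂ (Ψ y i) * ((γm 0 * Q) i j) * Ψ y j)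
      (∑ i, ∑ j, (((starRingEnd ℂ (Ψ x i) * ((γm 0 * Q) i j)) • (fderiv ℝ (fun y => Ψ y j) x))
        + (Ψ x j • (((γm 0 * Q) i j) • ((starL' ℝ : ℂ ≃L[ℝ] ℂ).toContinuousLinearMap.comp
            (fderiv ℝ (fun y => Ψ y i) x)))))) x :=
    HasFDerivAt.fun_sum fun i _ => HasFDerivAt.fun_sum fun j _ => hterm i j
  have hfun : (fun y => bil Q (Ψ y)) = fun y => ∑ i, ∑ j, starRingEnd ℂ (Ψ y i) * ((γm 0 * Q) i j) * Ψ y j :=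
    funext fun y => bil_expand Q (Ψ y)
  rw [pdc, hfun, hsum.fderiv]
  simp only [ContinuousLinearMap.sum_apply, ContinuousLinearMap.add_apply,
    ContinuousLinearMap.smul_apply, ContinuousLinearMap.comp_apply,
    ContinuousLinearEquiv.coe_coe, smul_eq_mul]
  refine Finset.sum_congr rfl fun i _ => Finset.sum_congr rfl fun j _ => ?_
  simp only [pdc]
  simp [starL'_apply, RCLike.star_def]
  ring

/-- for solutions of the ε-deformed Heisenberg equation
iγ^μ∂_μΨ = 2s(A + iεBγ₅)Ψ, the vector current is conserved for every ε, while
∂_μ I^μ = 4s(1−ε)AB (axial current conserved for the Heisenberg choice ε = 1). -/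
theorem heisenberg_current_conservation
    (Ψ : (Fin 4 → ℝ) → Fin 4 → ℂ) (s ε : ℝ)
    (hdiff : ∀ i, Differentiable ℝ (fun x => Ψ x i))
    (A B : (Fin 4 → ℝ) → ℂ)
    (hA : ∀ x, A x = bil 1 (Ψ x))
    (hB : ∀ x, B x = Complex.I * bil γ5 (Ψ x))
    -- the ε-deformed Heisenberg nonlinear spinor equation, componentwise
    (heq : ∀ x i, Complex.I * ∑ μ, ∑ j, γm μ i j * pdc μ (fun y => Ψ y j) x
      = 2 * (s : ℂ) * (A x * Ψ x i + Complex.I * (ε : ℂ) * B x * (γ5.mulVec (Ψ x)) i)) :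
    -- ∂_μ J^μ = 0
    (∀ x, ∑ μ, pdc μ (fun y => bil (γm μ) (Ψ y)) x = 0) ∧
    -- ∂_μ I^μ = 4s(1−ε)AB
    (∀ x, ∑ μ, pdc μ (fun y => bil (γm μ * γ5) (Ψ y)) x
      = 4 * (s : ℂ) * (1 - (ε : ℂ)) * A x * B x) := by
  constructor
  · intro x
    have E0 := heq x 0
    have E1 := heq x 1
    have E2 := heq x 2
    have E3 := heq x 3
    rw [hA x, hB x, bil_expand, bil_expand] at E0 E1 E2 E3
    simp only [Fin.sum_univ_four] at E0 E1 E2 E3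
    norm_num [γm, γ5_eq, Matrix.mul_apply, Matrix.mulVec, dotProduct,
      Fin.sum_univ_four, Matrix.vecHead, Matrix.vecTail, Matrix.one_apply,
      Matrix.cons_val_two, Matrix.cons_val_three] at E0 E1 E2 E3
    have F0 := congrArg (starRingEnd ℂ) E0
    have F1 := congrArg (starRingEnd ℂ) E1
    have F2 := congrArg (starRingEnd ℂ) E2
    have F3 := congrArg (starRingEnd ℂ) E3
    simp only [map_add, map_sub, map_neg, _root_.map_mul, map_ofNat, _root_.map_one, Complex.conj_I,
      Complex.conj_ofReal, Complex.conj_conj] at F0 F1 F2 F3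
    rw [Fin.sum_univ_four, pdc_bil Ψ hdiff _ 0 x, pdc_bil Ψ hdiff _ 1 x,
      pdc_bil Ψ hdiff _ 2 x, pdc_bil Ψ hdiff _ 3 x]
    simp only [Fin.sum_univ_four]
    norm_num [γm, γ5_eq, Matrix.mul_apply, Fin.sum_univ_four, Matrix.vecHead, Matrix.vecTail,
      Matrix.cons_val_two, Matrix.cons_val_three]
    set_option maxRecDepth 100000 in
    linear_combination (-Complex.I * (starRingEnd ℂ (Ψ x 0))) * E0 + (-Complex.I * (starRingEnd ℂ (Ψ x 1))) * E1 + (Complex.I * (starRingEnd ℂ (Ψ x 2))) * E2 + (Complex.I * (starRingEnd ℂ (Ψ x 3))) * E3 + (Complex.I * Ψ x 0) * F0 + (Complex.I * Ψ x 1) * F1 + (-Complex.I * Ψ x 2) * F2 + (-Complex.I * Ψ x 3) * F3 + (-((starRingEnd ℂ (Ψ x 3)))*(pdc 3 (fun y => Ψ y 1) x) + ((starRingEnd ℂ (Ψ x 3)))*(pdc 2 (fun y => Ψ y 0) x)*(Complex.I) + ((starRingEnd ℂ (Ψ x 3)))*(pdc 1 (fun y => Ψ y 0) x) + ((starRingEnd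 ℂ (Ψ x 3)))*(pdc 0 (fun y => Ψ y 3) x) + ((starRingEnd ℂ (Ψ x 2)))*(pdc 3 (fun y => Ψ y 0) x) - ((starRingEnd ℂ (Ψ x 2)))*(pdc 2 (fun y => Ψ y 1) x)*(Complex.I) + ((starRingEnd ℂ (Ψ x 2)))*(pdc 1 (fun y => Ψ y 1) x) + ((starRingEnd ℂ (Ψ x 2)))*(pdc 0 (fun y => Ψ y 2) x) - ((starRingEnd ℂ (Ψ x 1)))*(pdc 3 (fun y => Ψ y 3) x) + ((starRingEnd ℂ (Ψ x 1)))*(pdc 2 (fun y => Ψ y 2) x)*(Complex.I) + ((starRingEnd ℂ (Ψ x 1)))*(pdc 1 (fun y => Ψ y 2) x) + ((starRingEnd ℂ (Ψ x 1)))*(pdc 0 (fun y => Ψ y 1) x) + ((starRingEnd ℂ (Ψ x 0)))*(pdc 3 (fun y => Ψ y 2) x) - ((starRingEnd ℂ (Ψ x 0)))*(pdc 2 (fun y => Ψ y 3) x)*(Complex.I) + ((starRingEnd ℂ (Ψ x 0)))*(pdc 1 (fun y => Ψ y 3) x) + ((starRingEnd ℂ (Ψ x 0)))*(pdc 0 (fun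 y => Ψ y 0) x) - (Ψ x 3)*((starRingEnd ℂ (pdc 3 (fun y => Ψ y 1) x))) - (Ψ x 3)*((starRingEnd ℂ (pdc 2 (fun y => Ψ y 0) x)))*(Complex.I) + (Ψ x 3)*((starRingEnd ℂ (pdc 1 (fun y => Ψ y 0) x))) + (Ψ x 3)*((starRingEnd ℂ (pdc 0 (fun y => Ψ y 3) x))) + (Ψ x 2)*((starRingEnd ℂ (pdc 3 (fun y => Ψ y 0) x))) + (Ψ x 2)*((starRingEnd ℂ (pdc 2 (fun y => Ψ y 1) x)))*(Complex.I) + (Ψ x 2)*((starRingEnd ℂ (pdc 1 (fun y => Ψ y 1) x))) + (Ψ x 2)*((starRingEnd ℂ (pdc 0 (fun y => Ψ y 2) x))) - (Ψ x 1)*((starRingEnd ℂ (pdc 3 (fun y => Ψ y 3) x))) - (Ψ x 1)*((starRingEnd ℂ (pdc 2 (fun y => Ψ y 2) x)))*(Complex.I) + (Ψ x 1)*((starRingEnd ℂ (pdc 1 (fun y => Ψ y 2) x))) + (Ψ x 1)*((starRingEnd ℂ (pdc 0 (fun y => Ψ y 1) x))) + (Ψ x 0)*((starRingEnd ℂ (pdc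 3 (fun y => Ψ y 2) x))) + (Ψ x 0)*((starRingEnd ℂ (pdc 2 (fun y => Ψ y 3) x)))*(Complex.I) + (Ψ x 0)*((starRingEnd ℂ (pdc 1 (fun y => Ψ y 3) x))) + (Ψ x 0)*((starRingEnd ℂ (pdc 0 (fun y => Ψ y 0) x)))) * Complex.I_mul_I
  · intro x
    have E0 := heq x 0
    have E1 := heq x 1
    have E2 := heq x 2
    have E3 := heq x 3
    rw [hA x, hB x, bil_expand, bil_expand] at E0 E1 E2 E3
    simp only [Fin.sum_univ_four] at E0 E1 E2 E3
    norm_num [γm, γ5_eq, Matrix.mul_apply, Matrix.mulVec, dotProduct,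
      Fin.sum_univ_four, Matrix.vecHead, Matrix.vecTail, Matrix.one_apply,
      Matrix.cons_val_two, Matrix.cons_val_three] at E0 E1 E2 E3
    have F0 := congrArg (starRingEnd ℂ) E0
    have F1 := congrArg (starRingEnd ℂ) E1
    have F2 := congrArg (starRingEnd ℂ) E2
    have F3 := congrArg (starRingEnd ℂ) E3
    simp only [map_add, map_sub, map_neg, _root_.map_mul, map_ofNat, _root_.map_one, Complex.conj_I,
      Complex.conj_ofReal, Complex.conj_conj] at F0 F1 F2 F3
    rw [Fin.sum_univ_four, pdc_bil Ψ hdiff _ 0 x, pdc_bil Ψ hdiff _ 1 x,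
      pdc_bil Ψ hdiff _ 2 x, pdc_bil Ψ hdiff _ 3 x]
    simp only [Fin.sum_univ_four]
    rw [hA x, hB x, bil_expand, bil_expand]
    simp only [Fin.sum_univ_four]
    norm_num [γm, γ5_eq, Matrix.mul_apply, Fin.sum_univ_four, Matrix.vecHead, Matrix.vecTail,
      Matrix.one_apply, Matrix.cons_val_two, Matrix.cons_val_three]
    set_option maxRecDepth 100000 in
    linear_combination (-Complex.I * (starRingEnd ℂ (Ψ x 2))) * E0 + (-Complex.I * (starRingEnd ℂ (Ψ x 3))) * E1 + (Complex.I * (starRingEnd ℂ (Ψ x 0))) * E2 + (Complex.I * (starRingEnd ℂ (Ψ x 1))) * E3 + (Complex.I * Ψ x 2) * F0 + (Complex.I * Ψ x 3) * F1 + (-Complex.I * Ψ x 0) * F2 + (-Complex.I * Ψ x 1) * F3 + (-((starRingEnd ℂ (Ψ x 3)))*(pdc 3 (fun y => Ψ y 3) x) + ((starRingEnd ℂ (Ψ x 3)))*(pdc 2 (fun y => Ψ y 2) x)*(Complex.I) + ((starRingEnd ℂ (Ψ x 3)))*(pdc 1 (fun y => Ψ y 2) x) + ((starRingEnd ℂ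 (Ψ x 3)))*(pdc 0 (fun y => Ψ y 1) x) + ((starRingEnd ℂ (Ψ x 2)))*(pdc 3 (fun y => Ψ y 2) x) - ((starRingEnd ℂ (Ψ x 2)))*(pdc 2 (fun y => Ψ y 3) x)*(Complex.I) + ((starRingEnd ℂ (Ψ x 2)))*(pdc 1 (fun y => Ψ y 3) x) + ((starRingEnd ℂ (Ψ x 2)))*(pdc 0 (fun y => Ψ y 0) x) - ((starRingEnd ℂ (Ψ x 1)))*(pdc 3 (fun y => Ψ y 1) x) + ((starRingEnd ℂ (Ψ x 1)))*(pdc 2 (fun y => Ψ y 0) x)*(Complex.I) + ((starRingEnd ℂ (Ψ x 1)))*(pdc 1 (fun y => Ψ y 0) x) + ((starRingEnd ℂ (Ψ x 1)))*(pdc 0 (fun y => Ψ y 3) x) + ((starRingEnd ℂ (Ψ x 0)))*(pdc 3 (fun y => Ψ y 0) x) - ((starRingEnd ℂ (Ψ x 0)))*(pdc 2 (fun y => Ψ y 1) x)*(Complex.I) + ((starRingEnd ℂ (Ψ x 0)))*(pdc 1 (fun y => Ψ y 1) x) + ((starRingEnd ℂ (Ψ x 0)))*(pdc 0 (fun y =>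 Ψ y 2) x) - (Ψ x 3)*((starRingEnd ℂ (pdc 3 (fun y => Ψ y 3) x))) - (Ψ x 3)*((starRingEnd ℂ (pdc 2 (fun y => Ψ y 2) x)))*(Complex.I) + (Ψ x 3)*((starRingEnd ℂ (pdc 1 (fun y => Ψ y 2) x))) + (Ψ x 3)*((starRingEnd ℂ (pdc 0 (fun y => Ψ y 1) x))) - 4*(Ψ x 3)*(Ψ x 3)*((starRingEnd ℂ (Ψ x 1)))*((starRingEnd ℂ (Ψ x 3)))*((s:ℂ))*((ε:ℂ))*(Complex.I) + (Ψ x 2)*((starRingEnd ℂ (pdc 3 (fun y => Ψ y 2) x))) + (Ψ x 2)*((starRingEnd ℂ (pdc 2 (fun y => Ψ y 3) x)))*(Complex.I) + (Ψ x 2)*((starRingEnd ℂ (pdc 1 (fun y => Ψ y 3) x))) + (Ψ x 2)*((starRingEnd ℂ (pdc 0 (fun y => Ψ y 0) x))) - 4*(Ψ x 2)*(Ψ x 3)*((starRingEnd ℂ (Ψ x 1)))*((starRingEnd ℂ (Ψ x 2)))*((s:ℂ))*((ε:ℂ))*(Complex.I) - 4*(Ψ x 2)*(Ψ x 3)*((starRingEnd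 ℂ (Ψ x 0)))*((starRingEnd ℂ (Ψ x 3)))*((s:ℂ))*((ε:ℂ))*(Complex.I) - 4*(Ψ x 2)*(Ψ x 2)*((starRingEnd ℂ (Ψ x 0)))*((starRingEnd ℂ (Ψ x 2)))*((s:ℂ))*((ε:ℂ))*(Complex.I) - (Ψ x 1)*((starRingEnd ℂ (pdc 3 (fun y => Ψ y 1) x))) - (Ψ x 1)*((starRingEnd ℂ (pdc 2 (fun y => Ψ y 0) x)))*(Complex.I) + (Ψ x 1)*((starRingEnd ℂ (pdc 1 (fun y => Ψ y 0) x))) + (Ψ x 1)*((starRingEnd ℂ (pdc 0 (fun y => Ψ y 3) x))) + 4*(Ψ x 1)*(Ψ x 3)*((starRingEnd ℂ (Ψ x 3)))*((starRingEnd ℂ (Ψ x 3)))*((s:ℂ))*((ε:ℂ))*(Complex.I) + 4*(Ψ x 1)*(Ψ x 3)*((starRingEnd ℂ (Ψ x 1)))*((starRingEnd ℂ (Ψ x 1)))*((s:ℂ))*((ε:ℂ))*(Complex.I) + 4*(Ψ x 1)*(Ψ x 2)*((starRingEnd ℂ (Ψ x 2)))*((starRingEnd ℂ (Ψ x 3)))*((s:ℂ))*((ε:ℂ))*(Complex.I)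 + 4*(Ψ x 1)*(Ψ x 2)*((starRingEnd ℂ (Ψ x 0)))*((starRingEnd ℂ (Ψ x 1)))*((s:ℂ))*((ε:ℂ))*(Complex.I) - 4*(Ψ x 1)*(Ψ x 1)*((starRingEnd ℂ (Ψ x 1)))*((starRingEnd ℂ (Ψ x 3)))*((s:ℂ))*((ε:ℂ))*(Complex.I) + (Ψ x 0)*((starRingEnd ℂ (pdc 3 (fun y => Ψ y 0) x))) + (Ψ x 0)*((starRingEnd ℂ (pdc 2 (fun y => Ψ y 1) x)))*(Complex.I) + (Ψ x 0)*((starRingEnd ℂ (pdc 1 (fun y => Ψ y 1) x))) + (Ψ x 0)*((starRingEnd ℂ (pdc 0 (fun y => Ψ y 2) x))) + 4*(Ψ x 0)*(Ψ x 3)*((starRingEnd ℂ (Ψ x 2)))*((starRingEnd ℂ (Ψ x 3)))*((s:ℂ))*((ε:ℂ))*(Complex.I) + 4*(Ψ x 0)*(Ψ x 3)*((starRingEnd ℂ (Ψ x 0)))*((starRingEnd ℂ (Ψ x 1)))*((s:ℂ))*((ε:ℂ))*(Complex.I) + 4*(Ψ x 0)*(Ψ x 2)*((starRingEnd ℂ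 (Ψ x 2)))*((starRingEnd ℂ (Ψ x 2)))*((s:ℂ))*((ε:ℂ))*(Complex.I) + 4*(Ψ x 0)*(Ψ x 2)*((starRingEnd ℂ (Ψ x 0)))*((starRingEnd ℂ (Ψ x 0)))*((s:ℂ))*((ε:ℂ))*(Complex.I) - 4*(Ψ x 0)*(Ψ x 1)*((starRingEnd ℂ (Ψ x 1)))*((starRingEnd ℂ (Ψ x 2)))*((s:ℂ))*((ε:ℂ))*(Complex.I) - 4*(Ψ x 0)*(Ψ x 1)*((starRingEnd ℂ (Ψ x 0)))*((starRingEnd ℂ (Ψ x 3)))*((s:ℂ))*((ε:ℂ))*(Complex.I) - 4*(Ψ x 0)*(Ψ x 0)*((starRingEnd ℂ (Ψ x 0)))*((starRingEnd ℂ (Ψ x 2)))*((s:ℂ))*((ε:ℂ))*(Complex.I)) * Complex.I_mul_I
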